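/- arXiv:math-ph/0701024 — 3 statements merged into one kernel-verified Lean document; each statement's English description precedes it below -/
import Mathlib

section
/- With the matrices 𝒜ⁱ of the isentropic fluid system as above (a > 0, u ∈ ℝ³, κ ≠ 0), if e ∈ ℝ³ is a unit vector and ε = ±1, then the matrix (εa + u·e) I₄ + Σᵢ (−eᵢ) 𝒜ⁱ has nontrivial kernel; likewise, for any vectors e, m ∈ ℝ³, the matrix [u,e,m] I₄ + Σᵢ (−(e×m)ᵢ) 𝒜ⁱ has nontrivial kernel, where [u,e,m] = det(u,e,m). -/
/-- The coefficient matrices 𝒜ⁱ of the isentropic fluid dynamics equations,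
with index `Sum.inl 0` playing the role of the index `0` (the `a`-row)
and `Sum.inr j` the roles of the indices `j = 1,2,3`. -/
noncomputable def fluidMatrix (κ a : ℝ) (u : Fin 3 → ℝ) (i : Fin 3) :
    Matrix (Fin 1 ⊕ Fin 3) (Fin 1 ⊕ Fin 3) ℝ :=
  Matrix.fromBlocks
    (Matrix.of fun _ _ => u i)
    (Matrix.of fun _ j => if i = j then κ⁻¹ * a else 0)
    (Matrix.of fun j _ => if i = j then κ * a else 0)
    (Matrix.of fun j k => if j = k then u i else 0)

theorem wave_vectors_kernel (κ a : ℝ) (hκ : κ ≠ 0) (ha : 0 < a) (u : Fin 3 → ℝ)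
    (e m : Fin 3 → ℝ) (he : ∑ i, e i ^ 2 = 1) (ε : ℝ) (hε : ε = 1 ∨ ε = -1) :
    (∃ v : Fin 1 ⊕ Fin 3 → ℝ, v ≠ 0 ∧
      ((ε * a + ∑ i, u i * e i) • (1 : Matrix (Fin 1 ⊕ Fin 3) (Fin 1 ⊕ Fin 3) ℝ)
        + ∑ i, (-(e i)) • fluidMatrix κ a u i).mulVec v = 0) ∧
    (∃ w : Fin 1 ⊕ Fin 3 → ℝ, w ≠ 0 ∧
      ((Matrix.det (Matrix.of ![u, e, m])) •
          (1 : Matrix (Fin 1 ⊕ Fin 3) (Fin 1 ⊕ Fin 3) ℝ)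
        + ∑ i, (-(crossProduct e m i)) • fluidMatrix κ a u i).mulVec w = 0) := by
  have hε2 : ε * ε = 1 := by rcases hε with h | h <;> rw [h] <;> norm_num
  have hε0 : ε ≠ 0 := by rcases hε with h | h <;> rw [h] <;> norm_num
  constructor
  · refine ⟨Sum.elim (fun _ => ε) (fun j => κ * e j), ?_, ?_⟩
    · intro h
      have := congrFun h (Sum.inl 0)
      simp at this
      exact hε0 this
    · funext x
      cases x with
      | inl i =>
        simp [Matrix.mulVec, dotProduct, fluidMatrix, Matrix.fromBlocks,
          Fintype.sum_sum_type, Fin.sum_univ_three, Matrix.one_apply,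
          Matrix.add_apply, Matrix.smul_apply, Finset.sum_apply]
        have h1 : Finset.univ.sum (fun i => e i * e i) = 1 := by
          rw [← he]; congr 1; funext i; ring
        have hi : i = 0 := Subsingleton.elim i 0
        subst hi
        simp only [if_pos rfl]
        field_simp
        have he3 : e 0 ^ 2 + e 1 ^ 2 + e 2 ^ 2 = 1 := by rw [← he, Fin.sum_univ_three]
        simp only [↓reduceIte]
        linear_combination a * hε2 - a * he3
      | inr j =>
        simp [Matrix.mulVec, dotProduct, fluidMatrix, Matrix.fromBlocks,
          Fintype.sum_sum_type, Fin.sum_univ_three, Matrix.one_apply,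
          Matrix.add_apply, Matrix.smul_apply, Finset.sum_apply, Fin.forall_fin_succ]
        fin_cases j <;> simp <;> nlinarith [hε2]
  · have hne : ∃ j, e j ≠ 0 := by
      by_contra h
      push_neg at h
      simp [h] at he
    refine ⟨Sum.elim 0 e, ?_, ?_⟩
    · intro h
      obtain ⟨j, hj⟩ := hne
      exact hj (congrFun h (Sum.inr j))
    · have hdet : Matrix.det (Matrix.of ![u, e, m]) = ∑ i, u i * crossProduct e m i := by
        rw [Matrix.det_fin_three]
        simp [crossProduct, Fin.sum_univ_three]
        ring
      funext x
      cases x with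
      | inl i =>
        simp [Matrix.mulVec, dotProduct, fluidMatrix, Matrix.fromBlocks,
          Fintype.sum_sum_type, Fin.sum_univ_three, Matrix.one_apply,
          Matrix.add_apply, Matrix.smul_apply, Finset.sum_apply, crossProduct]
        ring
      | inr j =>
        simp [Matrix.mulVec, dotProduct, fluidMatrix, Matrix.fromBlocks,
          Fintype.sum_sum_type, Fin.sum_univ_three, Matrix.one_apply,
          Matrix.add_apply, Matrix.smul_apply, Finset.sum_apply, hdet, crossProduct]
        fin_cases j <;> simp <;> left <;> ring
end

section
/- Fix A₁ ∈ ℝ, κ > 0 and a unit vector e ∈ ℝ³. On the domain {(t,x) : A₁(1+κ)t ≠ 1}, define a(t,x) = A₁ (e·x) / (A₁(1+κ)t − 1) and u(t,x) = κ A₁ (e·x) e / (A₁(1+κ)t − 1). Then (a,u) satisfies the isentropic fluid equations: a_t + (u·∇)a + κ⁻¹ a div u = 0 and u_t + (u·∇)u + κ a ∇a = 0. -/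
open Function

lemma deriv_affine' (c d s : ℝ) : deriv (fun y : ℝ => c * y + d) s = c := by
  simpa using (((hasDerivAt_id s).const_mul c).add_const d).deriv

theorem rank1_potential_solution_isentropic (A₁ κ : ℝ) (hκ : 0 < κ)
    (e : Fin 3 → ℝ) (he : ∑ i, e i ^ 2 = 1)
    (a : ℝ → (Fin 3 → ℝ) → ℝ)
    (ha : ∀ t x, a t x = A₁ * (∑ i, e i * x i) / (A₁ * (1 + κ) * t - 1))
    (u : ℝ → (Fin 3 → ℝ) → Fin 3 → ℝ)
    (hu : ∀ t x j, u t x j =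
      κ * A₁ * (∑ i, e i * x i) * e j / (A₁ * (1 + κ) * t - 1))
    (t : ℝ) (x : Fin 3 → ℝ) (hd : A₁ * (1 + κ) * t ≠ 1) :
    (deriv (fun s => a s x) t
        + ∑ i, u t x i * deriv (fun s => a t (update x i s)) (x i)
        + κ⁻¹ * a t x * ∑ i, deriv (fun s => u t (update x i s) i) (x i) = 0) ∧
    ∀ j, deriv (fun s => u s x j) t
        + ∑ i, u t x i * deriv (fun s => u t (update x i s) j) (x i)
        + κ * a t x * deriv (fun s => a t (update x j s)) (x j) = 0 := by
  set S : ℝ := ∑ i, e i * x i with hS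
  set D : ℝ := A₁ * (1 + κ) * t - 1 with hDdef
  have hD : D ≠ 0 := sub_ne_zero.mpr hd
  have hE : e 0 ^ 2 + e 1 ^ 2 + e 2 ^ 2 = 1 := by
    simpa [Fin.sum_univ_three] using he
  have hden : HasDerivAt (fun s : ℝ => A₁ * (1 + κ) * s - 1) (A₁ * (1 + κ)) t := by
    simpa using ((hasDerivAt_id t).const_mul (A₁ * (1 + κ))).sub_const 1
  -- time derivative of a
  have hat : deriv (fun s => a s x) t = -(A₁ * S * (A₁ * (1 + κ))) / D ^ 2 := by
    have h1 : (fun s => a s x) = fun s => A₁ * S / (A₁ * (1 + κ) * s - 1) := by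
      funext s; rw [ha]
    rw [h1]
    have : deriv (fun s => A₁ * S / (A₁ * (1 + κ) * s - 1)) t = _ :=
      ((hasDerivAt_const t (A₁ * S)).div hden hD).deriv
    rw [this]; field_simp
    rw [← hDdef]; ring
  -- time derivative of u j
  have hut : ∀ j, deriv (fun s => u s x j) t
      = -(κ * A₁ * S * e j * (A₁ * (1 + κ))) / D ^ 2 := by
    intro j
    have h1 : (fun s => u s x j) = fun s => κ * A₁ * S * e j / (A₁ * (1 + κ) * s - 1) := by
      funext s; rw [hu]
    rw [h1]
    have : deriv (fun s => κ * A₁ * S * e j / (A₁ * (1 + κ) * s - 1)) t = _ :=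
      ((hasDerivAt_const t (κ * A₁ * S * e j)).div hden hD).deriv
    rw [this]; field_simp
    rw [← hDdef]; ring
  -- sum lemma
  have hsum : ∀ (i : Fin 3) (s : ℝ), (∑ j, e j * (update x i s) j) = e i * s + (S - e i * x i) := by
    intro i s
    fin_cases i <;> simp [Fin.sum_univ_three, Function.update, hS] <;> ring
  -- spatial derivative of a
  have hax : ∀ i : Fin 3, deriv (fun s => a t (update x i s)) (x i) = A₁ * e i / D := by
    intro i
    have h1 : (fun s => a t (update x i s))
        = fun s => (A₁ * e i / D) * s + A₁ * (S - e i * x i) / D := by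
      funext s; rw [ha, hsum]; field_simp; ring
    rw [h1, deriv_affine']
  -- spatial derivative of u j
  have hux : ∀ i j : Fin 3, deriv (fun s => u t (update x i s) j) (x i)
      = κ * A₁ * e i * e j / D := by
    intro i j
    have h1 : (fun s => u t (update x i s) j)
        = fun s => (κ * A₁ * e i * e j / D) * s + κ * A₁ * (S - e i * x i) * e j / D := by
      funext s; rw [hu, hsum]; field_simp; ring
    rw [h1, deriv_affine']
  have hax' : a t x = A₁ * S / D := by rw [ha]
  have hux' : ∀ j, u t x j = κ * A₁ * S * e j / D := by intro j; rw [hu]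
  have hinv : κ⁻¹ * κ = 1 := inv_mul_cancel₀ hκ.ne'
  clear_value S D
  constructor
  · rw [hat]
    simp only [Fin.sum_univ_three, hax, hux, hux', hax']
    linear_combination (A₁ ^ 2 * S * (κ + 1) / D ^ 2) * hE
      + (A₁ ^ 2 * S * (e 0 ^ 2 + e 1 ^ 2 + e 2 ^ 2) / D ^ 2) * hinv
  · intro j
    rw [hut j]
    simp only [Fin.sum_univ_three, hax, hux, hux', hax']
    linear_combination (κ ^ 2 * A₁ ^ 2 * S * e j / D ^ 2) * hE
end

section
/- Let g : ℝ → ℝ and b : ℝ² → ℝ be continuously differentiable, a₀ ∈ ℝ. Define on ℝ × ℝ³: u²(t,x) = u³(t,x) = g(x² − x³), u¹(t,x) = b(x² − t·g(x² − x³), x³ − t·g(x² − x³)), and a = a₀. Then u_t + (u·∇)u = 0, div u = 0, and hence (a,u) solves the isentropic fluid system a_t + (u·∇)a + κ⁻¹ a div u = 0, u_t + (u·∇)u + κ a ∇a = 0 for any κ ≠ 0. -/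
open Function

theorem rank2_solution_S1S2S3_isentropic
    (g : ℝ → ℝ) (hg : ContDiff ℝ 1 g)
    (b : ℝ → ℝ → ℝ) (hb : ContDiff ℝ 1 (fun p : ℝ × ℝ => b p.1 p.2))
    (a₀ κ : ℝ) (hκ : κ ≠ 0)
    (u : ℝ → (Fin 3 → ℝ) → Fin 3 → ℝ)
    (hu0 : ∀ t x, u t x 0 =
      b (x 1 - t * g (x 1 - x 2)) (x 2 - t * g (x 1 - x 2)))
    (hu1 : ∀ t x, u t x 1 = g (x 1 - x 2))
    (hu2 : ∀ t x, u t x 2 = g (x 1 - x 2))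
    (a : ℝ → (Fin 3 → ℝ) → ℝ) (ha : ∀ t x, a t x = a₀) :
    ∀ (t : ℝ) (x : Fin 3 → ℝ),
      (∀ j, deriv (fun s => u s x j) t
          + ∑ i, u t x i * deriv (fun s => u t (update x i s) j) (x i) = 0) ∧
      (∑ i, deriv (fun s => u t (update x i s) i) (x i) = 0) ∧
      (deriv (fun s => a s x) t
          + ∑ i, u t x i * deriv (fun s => a t (update x i s)) (x i)
          + κ⁻¹ * a t x * ∑ i, deriv (fun s => u t (update x i s) i) (x i) = 0) ∧
      (∀ j, deriv (fun s => u s x j) t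
          + ∑ i, u t x i * deriv (fun s => u t (update x i s) j) (x i)
          + κ * a t x * deriv (fun s => a t (update x j s)) (x j) = 0) := by
  intro t x
  have hdg : Differentiable ℝ g := hg.differentiable one_ne_zero
  have hdb : Differentiable ℝ (fun p : ℝ × ℝ => b p.1 p.2) := hb.differentiable one_ne_zero
  set G := g (x 1 - x 2) with hGdef
  set g' := deriv g (x 1 - x 2) with hg'def
  have hgd : HasDerivAt g g' (x 1 - x 2) := (hdg _).hasDerivAt
  set p : ℝ × ℝ := (x 1 - t * G, x 2 - t * G) with hpdef
  set B := fderiv ℝ (fun p : ℝ × ℝ => b p.1 p.2) p with hBdef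
  have hdF : HasFDerivAt (fun p : ℝ × ℝ => b p.1 p.2) B p := (hdb p).hasFDerivAt
  have hga : HasDerivAt (fun s : ℝ => g (s - x 2)) g' (x 1) := by
    have h := hgd.comp (x 1) ((hasDerivAt_id (x 1)).sub_const (x 2)); simp at h; exact h
  have hgb : HasDerivAt (fun s : ℝ => g (x 1 - s)) (-g') (x 2) := by
    have h := hgd.comp (x 2) ((hasDerivAt_const (x 2) (x 1)).sub (hasDerivAt_id (x 2))); simp at h; exact h
  -- time derivative of u0
  have D00t : deriv (fun s => u s x 0) t = B (-G, -G) := by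
    have key : (fun s => u s x 0) = fun s => b (x 1 - s * G) (x 2 - s * G) := by
      funext s; rw [hu0]
    rw [key]
    have h1 : HasDerivAt (fun s : ℝ => x 1 - s * G) (-G) t := by
      have h := (hasDerivAt_const t (x 1)).sub ((hasDerivAt_id t).mul_const G); simp at h; exact h
    have h2 : HasDerivAt (fun s : ℝ => x 2 - s * G) (-G) t := by
      have h := (hasDerivAt_const t (x 2)).sub ((hasDerivAt_id t).mul_const G); simp at h; exact h
    exact (hdF.comp_hasDerivAt t (h1.prodMk h2)).deriv
  have D0_0 : deriv (fun s => u t (update x 0 s) 0) (x 0) = 0 := by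
    have key : (fun s => u t (update x 0 s) 0)
        = fun _ : ℝ => b (x 1 - t * G) (x 2 - t * G) := by
      funext s; rw [hu0]; simp [hGdef]
    rw [key]; exact deriv_const _ _
  have D0_1 : deriv (fun s => u t (update x 1 s) 0) (x 1) = B (1 - t * g', -(t * g')) := by
    have key : (fun s => u t (update x 1 s) 0)
        = fun s => b (s - t * g (s - x 2)) (x 2 - t * g (s - x 2)) := by
      funext s; rw [hu0]; simp
    rw [key]
    have h1 : HasDerivAt (fun s : ℝ => s - t * g (s - x 2)) (1 - t * g') (x 1) := by
      have h := (hasDerivAt_id (x 1)).sub (hga.const_mul t); exact h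
    have h2 : HasDerivAt (fun s : ℝ => x 2 - t * g (s - x 2)) (-(t * g')) (x 1) := by
      have h := (hasDerivAt_const (x 1) (x 2)).sub (hga.const_mul t); simp at h; exact h
    exact (hdF.comp_hasDerivAt (x 1) (h1.prodMk h2)).deriv
  have D0_2 : deriv (fun s => u t (update x 2 s) 0) (x 2) = B (t * g', 1 + t * g') := by
    have key : (fun s => u t (update x 2 s) 0)
        = fun s => b (x 1 - t * g (x 1 - s)) (s - t * g (x 1 - s)) := by
      funext s; rw [hu0]; simp
    rw [key]
    have h1 : HasDerivAt (fun s : ℝ => x 1 - t * g (x 1 - s)) (t * g') (x 2) := by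
      have h := (hasDerivAt_const (x 2) (x 1)).sub (hgb.const_mul t); simp at h; exact h
    have h2 : HasDerivAt (fun s : ℝ => s - t * g (x 1 - s)) (1 + t * g') (x 2) := by
      have h := (hasDerivAt_id (x 2)).sub (hgb.const_mul t); simp [sub_neg_eq_add] at h; exact h
    exact (hdF.comp_hasDerivAt (x 2) (h1.prodMk h2)).deriv
  -- u1
  have D1t : deriv (fun s => u s x 1) t = 0 := by
    have key : (fun s => u s x 1) = fun _ : ℝ => G := by funext s; rw [hu1]
    rw [key]; exact deriv_const _ _
  have D1_0 : deriv (fun s => u t (update x 0 s) 1) (x 0) = 0 := by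
    have key : (fun s => u t (update x 0 s) 1) = fun _ : ℝ => G := by
      funext s; rw [hu1]; simp [hGdef]
    rw [key]; exact deriv_const _ _
  have D1_1 : deriv (fun s => u t (update x 1 s) 1) (x 1) = g' := by
    have key : (fun s => u t (update x 1 s) 1) = fun s => g (s - x 2) := by
      funext s; rw [hu1]; simp
    rw [key]; exact hga.deriv
  have D1_2 : deriv (fun s => u t (update x 2 s) 1) (x 2) = -g' := by
    have key : (fun s => u t (update x 2 s) 1) = fun s => g (x 1 - s) := by
      funext s; rw [hu1]; simp
    rw [key]; exact hgb.deriv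
  -- u2
  have D2t : deriv (fun s => u s x 2) t = 0 := by
    have key : (fun s => u s x 2) = fun _ : ℝ => G := by funext s; rw [hu2]
    rw [key]; exact deriv_const _ _
  have D2_0 : deriv (fun s => u t (update x 0 s) 2) (x 0) = 0 := by
    have key : (fun s => u t (update x 0 s) 2) = fun _ : ℝ => G := by
      funext s; rw [hu2]; simp [hGdef]
    rw [key]; exact deriv_const _ _
  have D2_1 : deriv (fun s => u t (update x 1 s) 2) (x 1) = g' := by
    have key : (fun s => u t (update x 1 s) 2) = fun s => g (s - x 2) := by
      funext s; rw [hu2]; simp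
    rw [key]; exact hga.deriv
  have D2_2 : deriv (fun s => u t (update x 2 s) 2) (x 2) = -g' := by
    have key : (fun s => u t (update x 2 s) 2) = fun s => g (x 1 - s) := by
      funext s; rw [hu2]; simp
    rw [key]; exact hgb.deriv
  have hdiv : (∑ i, deriv (fun s => u t (update x i s) i) (x i)) = 0 := by
    rw [Fin.sum_univ_three, D0_0, D1_1, D2_2]; ring
  have hmom : ∀ j, deriv (fun s => u s x j) t
      + ∑ i, u t x i * deriv (fun s => u t (update x i s) j) (x i) = 0 := by
    intro j
    match j with
    | 0 =>
      rw [Fin.sum_univ_three, D00t, D0_0, D0_1, D0_2, hu1, hu2]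
      have hzero : ((-G, -G) : ℝ × ℝ) + G • (1 - t * g', -(t * g'))
          + G • (t * g', 1 + t * g') = 0 := by
        have h : ((-G, -G) : ℝ × ℝ) + G • (1 - t * g', -(t * g'))
            + G • (t * g', 1 + t * g') = ((0, 0) : ℝ × ℝ) := by
          simp only [Prod.smul_mk, smul_eq_mul, Prod.mk_add_mk, Prod.mk.injEq]
          constructor <;> ring
        simpa using h
      have hB : B (-G, -G) + G * B (1 - t * g', -(t * g')) + G * B (t * g', 1 + t * g') = 0 := by
        have h1 : G * B (1 - t * g', -(t * g')) = B (G • (1 - t * g', -(t * g'))) := by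
          rw [map_smul, smul_eq_mul]
        have h2 : G * B (t * g', 1 + t * g') = B (G • (t * g', 1 + t * g')) := by
          rw [map_smul, smul_eq_mul]
        rw [h1, h2, ← map_add, ← map_add, hzero, map_zero]
      linarith [hB]
    | 1 => rw [Fin.sum_univ_three, D1t, D1_0, D1_1, D1_2, hu1, hu2]; ring
    | 2 => rw [Fin.sum_univ_three, D2t, D2_0, D2_1, D2_2, hu1, hu2]; ring
  have hat : deriv (fun s => a s x) t = 0 := by
    have key : (fun s => a s x) = fun _ : ℝ => a₀ := funext fun s => ha s x
    rw [key]; exact deriv_const _ _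
  have hax : ∀ i, deriv (fun s => a t (update x i s)) (x i) = 0 := by
    intro i
    have key : (fun s => a t (update x i s)) = fun _ : ℝ => a₀ := funext fun s => ha t _
    rw [key]; exact deriv_const _ _
  refine ⟨hmom, hdiv, ?_, fun j => ?_⟩
  · rw [hat, hdiv]; simp [hax]
  · rw [hax j]; simpa using hmom j
end
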